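/- arXiv:math/0002060 — 2 statements merged into one kernel-verified Lean document; each statement's English description precedes it below -/
import Mathlib

section
/- For any two vertices a, b of Γ, the ℂ-vector space e_a A(Γ) e_b has dimension 2 if a = b, dimension 1 if a and b are adjacent in Γ, and dimension 0 otherwise. -/
set_option linter.unusedSectionVars false
set_option linter.unreachableTactic false
set_option linter.unnecessarySeqFocus false
set_option linter.unusedTactic false
set_option maxHeartbeats 1000000


/-!
The zigzag algebra `A(Γ)` of a finite simple graph `Γ`, presented as a quotient of the
free algebra on generators `{e_a : a ∈ V} ∪ {x_{ab} : a,b adjacent}`.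
-/

noncomputable section

/-- Generators of the zigzag algebra: one idempotent `e_a` per vertex `a`, and one
generator `x_{ab}` (the arrow `a → b` in the double quiver) per ordered adjacent pair. -/
def ZigzagGen {V : Type} (G : SimpleGraph V) : Type :=
  V ⊕ {p : V × V // G.Adj p.1 p.2}

/-- The idempotent generator `e_a` inside the free algebra. -/
def zge (k : Type) [CommRing k] {V : Type} (G : SimpleGraph V) (a : V) :
    FreeAlgebra k (ZigzagGen G) :=
  FreeAlgebra.ι k (Sum.inl a)

/-- The arrow generator `x_{ab}` inside the free algebra. -/
def zgx (k : Type) [CommRing k] {V : Type} (G : SimpleGraph V) {a b : V} (h : G.Adj a b) :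
    FreeAlgebra k (ZigzagGen G) :=
  FreeAlgebra.ι k (Sum.inr ⟨(a, b), h⟩)

/-- The defining relations of the zigzag algebra `A(Γ)`:
`e_a e_b = δ_{ab} e_a`, `Σ_a e_a = 1`, `e_b x_{ab} = x_{ab} = x_{ab} e_a`,
`x_{bc} x_{ab} = 0` for `c ≠ a`, and `x_{ba} x_{ab} = x_{ca} x_{ac}`. -/
inductive ZigzagRel (k : Type) [CommRing k] {V : Type} [Fintype V] (G : SimpleGraph V) :
    FreeAlgebra k (ZigzagGen G) → FreeAlgebra k (ZigzagGen G) → Prop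
  | idem (a : V) : ZigzagRel k G (zge k G a * zge k G a) (zge k G a)
  | orth (a b : V) (h : a ≠ b) : ZigzagRel k G (zge k G a * zge k G b) 0
  | sum_one : ZigzagRel k G (∑ a : V, zge k G a) 1
  | target_id {a b : V} (h : G.Adj a b) :
      ZigzagRel k G (zge k G b * zgx k G h) (zgx k G h)
  | source_id {a b : V} (h : G.Adj a b) :
      ZigzagRel k G (zgx k G h * zge k G a) (zgx k G h)
  | comp_zero {a b c : V} (h₁ : G.Adj a b) (h₂ : G.Adj b c) (hca : c ≠ a) :
      ZigzagRel k G (zgx k G h₂ * zgx k G h₁) 0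
  | zigzag {a b c : V} (hab : G.Adj a b) (hac : G.Adj a c) :
      ZigzagRel k G (zgx k G hab.symm * zgx k G hab) (zgx k G hac.symm * zgx k G hac)

/-- The zigzag algebra `A(Γ)`. -/
abbrev ZigzagAlgebra (k : Type) [CommRing k] {V : Type} [Fintype V] (G : SimpleGraph V) : Type :=
  RingQuot (ZigzagRel k G)

/-- The idempotent `e_a` of the zigzag algebra. -/
def ZigzagAlgebra.e (k : Type) [CommRing k] {V : Type} [Fintype V] (G : SimpleGraph V)
    (a : V) : ZigzagAlgebra k G :=
  RingQuot.mkAlgHom k (ZigzagRel k G) (zge k G a)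

namespace ZZ
variable {V : Type} [Fintype V] [DecidableEq V] (G : SimpleGraph V) [DecidableRel G.Adj]

abbrev RB := V ⊕ ({p : V × V // G.Adj p.1 p.2} ⊕ V)
abbrev RU := RB G → ℂ

def tgt : RB G → V
  | .inl c => c
  | .inr (.inl p) => p.1.2
  | .inr (.inr c) => c

def ea (a : V) : RU G →ₗ[ℂ] RU G where
  toFun f i := if tgt G i = a then f i else 0
  map_add' f g := by funext i; by_cases h : tgt G i = a <;> simp [h]
  map_smul' c f := by funext i; by_cases h : tgt G i = a <;> simp [h]

def xx {a b : V} (h : G.Adj a b) : RU G →ₗ[ℂ] RU G where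
  toFun f i :=
    match i with
    | .inl _ => 0
    | .inr (.inl p) => if p.1 = (a, b) then f (.inl a) else 0
    | .inr (.inr c) => if c = b then f (.inr (.inl ⟨(b,a), h.symm⟩)) else 0
  map_add' f g := by funext i; rcases i with c | p | c <;> dsimp <;> (try split) <;> simp
  map_smul' c f := by funext i; rcases i with d | p | d <;> dsimp <;> (try split) <;> simp

@[simp] lemma ea_apply (a : V) (f : RU G) (i : RB G) :
    ea G a f i = if tgt G i = a then f i else 0 := rfl

@[simp] lemma xx_apply_inl {a b : V} (h : G.Adj a b) (f : RU G) (c : V) :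
    xx G h f (.inl c) = 0 := rfl
@[simp] lemma xx_apply_x {a b : V} (h : G.Adj a b) (f : RU G) (p : {p : V × V // G.Adj p.1 p.2}) :
    xx G h f (.inr (.inl p)) = if p.1 = (a, b) then f (.inl a) else 0 := rfl
@[simp] lemma xx_apply_w {a b : V} (h : G.Adj a b) (f : RU G) (c : V) :
    xx G h f (.inr (.inr c)) = if c = b then f (.inr (.inl ⟨(b,a), h.symm⟩)) else 0 := rfl

/-- generator assignment -/
def genMap : ZigzagGen G → (RU G →ₗ[ℂ] RU G) := fun g =>
  match g with
  | .inl a => ea G a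
  | .inr p => xx G p.2

def flift : FreeAlgebra ℂ (ZigzagGen G) →ₐ[ℂ] (RU G →ₗ[ℂ] RU G) :=
  FreeAlgebra.lift ℂ (genMap G)

@[simp] lemma flift_zge (a : V) : flift G (zge ℂ G a) = ea G a := by
  exact FreeAlgebra.lift_ι_apply _ _

@[simp] lemma flift_zgx {a b : V} (h : G.Adj a b) : flift G (zgx ℂ G h) = xx G h := by
  exact FreeAlgebra.lift_ι_apply _ _

lemma flift_rel : ∀ ⦃x y⦄, ZigzagRel ℂ G x y → flift G x = flift G y := by
  intro x y r
  induction r with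
  | idem a =>
      simp only [map_mul, flift_zge]
      refine LinearMap.ext fun f => funext fun i => ?_
      rcases i with c | p | c <;> simp [tgt] <;> split_ifs <;> simp_all
  | orth a b h =>
      simp only [map_mul, flift_zge, map_zero]
      refine LinearMap.ext fun f => funext fun i => ?_
      rcases i with c | p | c <;> simp [tgt] <;> split_ifs <;> simp_all
  | sum_one =>
      refine LinearMap.ext fun f => funext fun i => ?_
      simp only [map_sum, map_one, LinearMap.coe_sum, Finset.sum_apply, flift_zge,
        ea_apply, Module.End.one_apply]
      rw [Finset.sum_ite_eq Finset.univ (tgt G i) (fun _ => f i)]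
      simp
  | target_id h =>
      simp only [map_mul, flift_zge, flift_zgx]
      refine LinearMap.ext fun f => funext fun i => ?_
      rcases i with c | p | c <;> simp [tgt] <;> (try split_ifs) <;> simp_all [Prod.ext_iff]
  | source_id h =>
      simp only [map_mul, flift_zge, flift_zgx]
      refine LinearMap.ext fun f => funext fun i => ?_
      rcases i with c | p | c <;> simp [tgt] <;> (try split_ifs) <;> simp_all [Prod.ext_iff]
  | comp_zero h₁ h₂ hca =>
      simp only [map_mul, flift_zgx, map_zero]
      refine LinearMap.ext fun f => funext fun i => ?_
      rcases i with c | p | c <;> simp [tgt] <;> (try split_ifs) <;> simp_all [Prod.ext_iff] <;>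
        (try intro h hh) <;> simp_all <;> omega
  | zigzag hab hac =>
      simp only [map_mul, flift_zgx]
      refine LinearMap.ext fun f => funext fun i => ?_
      rcases i with c | p | c <;> simp [tgt, Prod.ext_iff] <;> (try split_ifs) <;>
        simp_all [Prod.ext_iff]

def rho : ZigzagAlgebra ℂ G →ₐ[ℂ] (RU G →ₗ[ℂ] RU G) :=
  RingQuot.liftAlgHom ℂ ⟨flift G, flift_rel G⟩

@[simp] lemma rho_e (a : V) : rho G (ZigzagAlgebra.e ℂ G a) = ea G a := by
  simp [rho, ZigzagAlgebra.e, RingQuot.liftAlgHom_mkAlgHom_apply]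

@[simp] lemma rho_x {a b : V} (h : G.Adj a b) :
    rho G (RingQuot.mkAlgHom ℂ (ZigzagRel ℂ G) (zgx ℂ G h)) = xx G h := by
  simp [rho, RingQuot.liftAlgHom_mkAlgHom_apply]

end ZZ

namespace ZZ
variable {V : Type} [Fintype V] [DecidableEq V] (G : SimpleGraph V) [DecidableRel G.Adj]

def E (a : V) : ZigzagAlgebra ℂ G := ZigzagAlgebra.e ℂ G a
def X {a b : V} (h : G.Adj a b) : ZigzagAlgebra ℂ G :=
  RingQuot.mkAlgHom ℂ (ZigzagRel ℂ G) (zgx ℂ G h)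

lemma rel {x y : FreeAlgebra ℂ (ZigzagGen G)} (h : ZigzagRel ℂ G x y) :
    RingQuot.mkAlgHom ℂ (ZigzagRel ℂ G) x = RingQuot.mkAlgHom ℂ (ZigzagRel ℂ G) y :=
  RingQuot.mkAlgHom_rel ℂ h

lemma E_mul_E (a : V) : E G a * E G a = E G a := by
  simpa [E, ZigzagAlgebra.e, map_mul] using rel G (ZigzagRel.idem a)

lemma E_mul_E_ne {a b : V} (h : a ≠ b) : E G a * E G b = 0 := by
  simpa [E, ZigzagAlgebra.e, map_mul] using rel G (ZigzagRel.orth a b h)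

lemma sum_E : ∑ a : V, E G a = 1 := by
  simpa [E, ZigzagAlgebra.e, map_sum] using rel G (ZigzagRel.sum_one (k := ℂ) (G := G))

lemma E_mul_X {a b : V} (h : G.Adj a b) : E G b * X G h = X G h := by
  simpa [E, X, ZigzagAlgebra.e, map_mul] using rel G (ZigzagRel.target_id h)

lemma X_mul_E {a b : V} (h : G.Adj a b) : X G h * E G a = X G h := by
  simpa [E, X, ZigzagAlgebra.e, map_mul] using rel G (ZigzagRel.source_id h)

lemma X_mul_X {a b c : V} (h₁ : G.Adj a b) (h₂ : G.Adj b c) (hca : c ≠ a) :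
    X G h₂ * X G h₁ = 0 := by
  simpa [X, map_mul] using rel G (ZigzagRel.comp_zero h₁ h₂ hca)

lemma zig {a b c : V} (hab : G.Adj a b) (hac : G.Adj a c) :
    X G hab.symm * X G hab = X G hac.symm * X G hac := by
  simpa [X, map_mul] using rel G (ZigzagRel.zigzag hab hac)

lemma E_mul_X_ne {c a b : V} (h : G.Adj a b) (hc : c ≠ b) : E G c * X G h = 0 := by
  rw [← E_mul_X G h, ← mul_assoc, E_mul_E_ne G hc, zero_mul]

lemma X_mul_E_ne {a b c : V} (h : G.Adj a b) (hc : a ≠ c) : X G h * E G c = 0 := by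
  rw [← X_mul_E G h, mul_assoc, E_mul_E_ne G hc, mul_zero]

section Conn

lemma exists_adj (hconn : G.Connected) (hcard : 2 < Fintype.card V) (c : V) : ∃ d, G.Adj c d := by
  obtain ⟨d, hd⟩ := Fintype.exists_ne_of_one_lt_card (by omega) c
  obtain ⟨w⟩ := hconn.preconnected c d
  cases w with
  | nil => exact absurd rfl (Ne.symm hd)
  | cons h p => exact ⟨_, h⟩

lemma boundary (hconn : G.Connected) (hcard : 2 < Fintype.card V) {a b : V} (hab : G.Adj a b) :
    (∃ c, G.Adj a c ∧ c ≠ b) ∨ (∃ c, G.Adj b c ∧ c ≠ a) := by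
  by_contra hcon
  push_neg at hcon
  obtain ⟨h1, h2⟩ := hcon
  have stay : ∀ {u v : V} (_ : G.Walk u v), u = a ∨ u = b → v = a ∨ v = b := by
    intro u v w
    induction w with
    | nil => exact id
    | cons h p ih =>
        rintro (rfl | rfl)
        · exact ih (Or.inr (h1 _ h))
        · exact ih (Or.inl (h2 _ h))
  have huniv : (Finset.univ : Finset V) ⊆ {a, b} := by
    intro v _
    obtain ⟨w⟩ := hconn.preconnected a v
    rcases stay w (Or.inl rfl) with rfl | rfl <;> simp
  have := Finset.card_le_card huniv
  have h2 : ({a, b} : Finset V).card ≤ 2 :=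
    (Finset.card_insert_le _ _).trans (by simp)
  simp [Finset.card_univ] at this
  omega

end Conn

section Om
variable (nb : V → V) (hnb : ∀ c, G.Adj c (nb c))

def Om (c : V) : ZigzagAlgebra ℂ G := X G (hnb c).symm * X G (hnb c)

lemma Om_eq {c d : V} (h : G.Adj c d) : X G h.symm * X G h = Om G nb hnb c :=
  zig G h (hnb c)

lemma E_mul_Om (c : V) : E G c * Om G nb hnb c = Om G nb hnb c := by
  rw [Om, ← mul_assoc, E_mul_X G (hnb c).symm]

lemma E_mul_Om_ne {d c : V} (h : d ≠ c) : E G d * Om G nb hnb c = 0 := by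
  rw [Om, ← mul_assoc, E_mul_X_ne G (hnb c).symm h, zero_mul]

lemma Om_mul_E (c : V) : Om G nb hnb c * E G c = Om G nb hnb c := by
  rw [Om, mul_assoc, X_mul_E G (hnb c)]

lemma Om_mul_E_ne {c d : V} (h : c ≠ d) : Om G nb hnb c * E G d = 0 := by
  rw [Om, mul_assoc, X_mul_E_ne G (hnb c) h, mul_zero]

end Om

section Triple
variable (nb : V → V) (hnb : ∀ c, G.Adj c (nb c))

lemma triple (hconn : G.Connected) (hcard : 2 < Fintype.card V) {a b : V} (h : G.Adj a b) : X G h * (X G h.symm * X G h) = 0 := by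
  rcases boundary G hconn hcard h with ⟨c, hac, hcb⟩ | ⟨c, hbc, hca⟩
  · rw [zig G h hac, ← mul_assoc, X_mul_X G hac.symm h (Ne.symm hcb), zero_mul]
  · rw [← mul_assoc]
    have h1 : X G h * X G h.symm = X G hbc.symm * X G hbc := zig G h.symm hbc
    rw [h1, mul_assoc, X_mul_X G h hbc hca, mul_zero]

lemma X_mul_Om (hconn : G.Connected) (hcard : 2 < Fintype.card V) {a b : V} (h : G.Adj a b) (c : V) :
    X G h * Om G nb hnb c = 0 := by
  by_cases hc : c = a
  · subst hc
    rw [← Om_eq G nb hnb h]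
    exact triple G hconn hcard h
  · rw [← E_mul_Om G nb hnb c, ← mul_assoc, X_mul_E_ne G h (fun hh => hc hh.symm), zero_mul]

lemma Om_mul_X (hconn : G.Connected) (hcard : 2 < Fintype.card V) {a b : V} (h : G.Adj a b) (c : V) :
    Om G nb hnb c * X G h = 0 := by
  by_cases hc : c = b
  · subst hc
    have h1 : X G h * X G h.symm = Om G nb hnb c := Om_eq G nb hnb h.symm
    rw [← h1, mul_assoc]
    exact triple G hconn hcard h
  · rw [← E_mul_X G h, ← mul_assoc, Om_mul_E_ne G nb hnb hc, zero_mul]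

lemma Om_mul_Om (hconn : G.Connected) (hcard : 2 < Fintype.card V) (c d : V) :
    Om G nb hnb c * Om G nb hnb d = 0 := by
  rw [Om, mul_assoc, X_mul_Om G nb hnb hconn hcard (hnb c) d, mul_zero]

end Triple

section Span
variable (nb : V → V) (hnb : ∀ c, G.Adj c (nb c))

def Sset : Set (ZigzagAlgebra ℂ G) :=
  {y | (∃ c, y = E G c) ∨ (∃ (a b : V) (h : G.Adj a b), y = X G h) ∨
    (∃ c, y = Om G nb hnb c)}

lemma mem_S_E (c : V) : E G c ∈ Sset G nb hnb := Or.inl ⟨c, rfl⟩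
lemma mem_S_X {a b : V} (h : G.Adj a b) : X G h ∈ Sset G nb hnb :=
  Or.inr (Or.inl ⟨a, b, h, rfl⟩)
lemma mem_S_Om (c : V) : Om G nb hnb c ∈ Sset G nb hnb := Or.inr (Or.inr ⟨c, rfl⟩)

lemma mul_S (hconn : G.Connected) (hcard : 2 < Fintype.card V) :
    ∀ s ∈ Sset G nb hnb, ∀ t ∈ Sset G nb hnb,
      s * t ∈ Submodule.span ℂ (Sset G nb hnb) := by
  rintro s hs t ht
  rcases hs with ⟨c, rfl⟩ | ⟨a1, b1, h1, rfl⟩ | ⟨c, rfl⟩ <;>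
    rcases ht with ⟨d, rfl⟩ | ⟨a2, b2, h2, rfl⟩ | ⟨d, rfl⟩
  · by_cases hcd : c = d
    · subst hcd; rw [E_mul_E]; exact Submodule.subset_span (mem_S_E G nb hnb c)
    · rw [E_mul_E_ne G hcd]; exact Submodule.zero_mem _
  · by_cases hcb : c = b2
    · subst hcb; rw [E_mul_X]; exact Submodule.subset_span (mem_S_X G nb hnb h2)
    · rw [E_mul_X_ne G h2 hcb]; exact Submodule.zero_mem _
  · by_cases hcd : c = d
    · subst hcd; rw [E_mul_Om]; exact Submodule.subset_span (mem_S_Om G nb hnb c)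
    · rw [E_mul_Om_ne G nb hnb hcd]; exact Submodule.zero_mem _
  · by_cases hd : a1 = d
    · subst hd; rw [X_mul_E]; exact Submodule.subset_span (mem_S_X G nb hnb h1)
    · rw [X_mul_E_ne G h1 hd]; exact Submodule.zero_mem _
  · by_cases hb : a1 = b2
    · subst hb
      by_cases hca : b1 = a2
      · subst hca
        rw [show X G h1 = X G h2.symm from rfl, Om_eq G nb hnb h2]
        exact Submodule.subset_span (mem_S_Om G nb hnb _)
      · rw [X_mul_X G h2 h1 hca]; exact Submodule.zero_mem _
    · rw [← X_mul_E G h1, mul_assoc, E_mul_X_ne G h2 hb, mul_zero]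
      exact Submodule.zero_mem _
  · rw [X_mul_Om G nb hnb hconn hcard h1 d]; exact Submodule.zero_mem _
  · by_cases hcd : c = d
    · subst hcd; rw [Om_mul_E]; exact Submodule.subset_span (mem_S_Om G nb hnb c)
    · rw [Om_mul_E_ne G nb hnb hcd]; exact Submodule.zero_mem _
  · rw [Om_mul_X G nb hnb hconn hcard h2 c]; exact Submodule.zero_mem _
  · rw [Om_mul_Om G nb hnb hconn hcard c d]; exact Submodule.zero_mem _

lemma one_mem_span : (1 : ZigzagAlgebra ℂ G) ∈ Submodule.span ℂ (Sset G nb hnb) := by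
  rw [← sum_E G]
  exact Submodule.sum_mem _ fun a _ => Submodule.subset_span (mem_S_E G nb hnb a)

lemma span_S_top (hconn : G.Connected) (hcard : 2 < Fintype.card V) :
    Submodule.span ℂ (Sset G nb hnb) = ⊤ := by
  set p := Submodule.span ℂ (Sset G nb hnb) with hp
  have hmulp : ∀ x ∈ p, ∀ y ∈ p, x * y ∈ p := by
    intro x hx y hy
    have hle : p * p ≤ p := by
      rw [hp, Submodule.span_mul_span]
      refine Submodule.span_le.2 ?_
      rintro z hz
      rw [Set.mem_mul] at hz
      obtain ⟨s, hs, t, ht, rfl⟩ := hz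
      exact mul_S G nb hnb hconn hcard s hs t ht
    exact hle (Submodule.mul_mem_mul hx hy)
  rw [eq_top_iff]
  rintro z -
  obtain ⟨x, rfl⟩ := RingQuot.mkAlgHom_surjective ℂ (ZigzagRel ℂ G) z
  induction x using FreeAlgebra.induction with
  | grade0 r =>
      rw [AlgHom.commutes, Algebra.algebraMap_eq_smul_one]
      exact Submodule.smul_mem _ _ (one_mem_span G nb hnb)
  | grade1 g =>
      obtain a | ⟨⟨a, b⟩, h⟩ := g
      · exact Submodule.subset_span (mem_S_E G nb hnb a)
      · exact Submodule.subset_span (mem_S_X G nb hnb h)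
  | mul x y hx hy => rw [map_mul]; exact hmulp _ hx _ hy
  | add x y hx hy => rw [map_add]; exact Submodule.add_mem _ hx hy

end Span

section Rank
variable (nb : V → V) (hnb : ∀ c, G.Adj c (nb c))

lemma rho_X {a b : V} (h : G.Adj a b) : rho G (X G h) = xx G h := rho_x G h

lemma rho_Om (c : V) :
    rho G (Om G nb hnb c) = xx G (hnb c).symm * xx G (hnb c) := by
  rw [Om, map_mul, rho_X, rho_X]

lemma X_ne_zero {a b : V} (h : G.Adj a b) : X G h ≠ 0 := by
  intro h0
  have h1 := congrArg (rho G) h0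
  rw [rho_X, map_zero] at h1
  have h2 := congrFun (congrArg (fun L : RU G →ₗ[ℂ] RU G => L (Pi.single (Sum.inl a) 1)) h1)
    (.inr (.inl ⟨(a, b), h⟩))
  simp at h2

lemma pair_indep (a : V) : LinearIndependent ℂ ![E G a, Om G nb hnb a] := by
  rw [LinearIndependent.pair_iff]
  intro s t hst
  have h0 := congrArg (rho G) hst
  rw [map_add, map_smul, map_smul, map_zero, rho_Om] at h0
  have h0' : rho G (E G a) = ea G a := rho_e G a
  rw [h0'] at h0
  constructor
  · have h1 := congrFun (congrArg (fun L : RU G →ₗ[ℂ] RU G => L (Pi.single (Sum.inl a) 1)) h0)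
      (.inl a)
    simpa [Module.End.mul_apply, tgt] using h1
  · have h2 := congrFun (congrArg (fun L : RU G →ₗ[ℂ] RU G => L (Pi.single (Sum.inl a) 1)) h0)
      (.inr (.inr a))
    simpa [Module.End.mul_apply, tgt] using h2

end Rank
end ZZ

open ZZ in
/-- for vertices `a, b` of `Γ`, the subspace `e_a A(Γ) e_b` (the range of
the `ℂ`-linear map `x ↦ e_a * x * e_b`) has dimension `2` if `a = b`, dimension `1` if
`a` and `b` are adjacent, and dimension `0` otherwise. -/
theorem zigzagAlgebra_finrank_corner {V : Type} [Fintype V] [DecidableEq V]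
    (G : SimpleGraph V) [DecidableRel G.Adj]
    (hconn : G.Connected) (hcard : 2 < Fintype.card V) (a b : V) :
    Module.finrank ℂ
      (LinearMap.range
        ((LinearMap.mulLeft ℂ (ZigzagAlgebra.e ℂ G a)).comp
          (LinearMap.mulRight ℂ (ZigzagAlgebra.e ℂ G b)))) =
      if a = b then 2 else if G.Adj a b then 1 else 0 := by
  classical
  have hex : ∀ c, ∃ d, G.Adj c d := exists_adj G hconn hcard
  set nb : V → V := fun c => (hex c).choose with hnbdef
  have hnb : ∀ c, G.Adj c (nb c) := fun c => (hex c).choose_spec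
  set C := (LinearMap.mulLeft ℂ (ZigzagAlgebra.e ℂ G a)).comp
      (LinearMap.mulRight ℂ (ZigzagAlgebra.e ℂ G b)) with hC
  have hCapp : ∀ x, C x = E G a * x * E G b := by
    intro x
    simp [hC, E, LinearMap.mulLeft_apply, LinearMap.mulRight_apply, mul_assoc]
  have hrange : LinearMap.range C = Submodule.span ℂ (C '' Sset G nb hnb) := by
    rw [LinearMap.range_eq_map, ← span_S_top G nb hnb hconn hcard, Submodule.map_span]
  by_cases hab : a = b
  · subst hab
    simp only [if_pos rfl]
    have heq : Submodule.span ℂ (C '' Sset G nb hnb) =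
        Submodule.span ℂ {E G a, Om G nb hnb a} := by
      apply le_antisymm
      · rw [Submodule.span_le]
        rintro _ ⟨s, hs, rfl⟩
        rcases hs with ⟨c, rfl⟩ | ⟨a1, b1, h1, rfl⟩ | ⟨c, rfl⟩
        · rw [hCapp]
          by_cases hc : c = a
          · subst hc
            rw [E_mul_E, E_mul_E]
            exact Submodule.subset_span (Set.mem_insert _ _)
          · rw [E_mul_E_ne G (fun hh => hc hh.symm), zero_mul]
            exact Submodule.zero_mem _
        · rw [hCapp]
          by_cases hb1 : a = b1
          · subst hb1
            rw [E_mul_X]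
            by_cases ha1 : a1 = a
            · subst ha1; exact absurd h1 (G.irrefl)
            · rw [X_mul_E_ne G h1 ha1]; exact Submodule.zero_mem _
          · rw [E_mul_X_ne G h1 hb1, zero_mul]; exact Submodule.zero_mem _
        · rw [hCapp]
          by_cases hc : c = a
          · subst hc
            rw [E_mul_Om G nb hnb, Om_mul_E G nb hnb]
            exact Submodule.subset_span (Set.mem_insert_of_mem _ rfl)
          · rw [E_mul_Om_ne G nb hnb (fun hh => hc hh.symm), zero_mul]
            exact Submodule.zero_mem _
      · rw [Submodule.span_le]
        rintro z (rfl | rfl)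
        · refine Submodule.subset_span ⟨E G a, mem_S_E G nb hnb a, ?_⟩
          rw [hCapp, E_mul_E, E_mul_E]
        · refine Submodule.subset_span ⟨Om G nb hnb a, mem_S_Om G nb hnb a, ?_⟩
          rw [hCapp, E_mul_Om G nb hnb, Om_mul_E G nb hnb]
    rw [hrange, heq]
    have hset : ({E G a, Om G nb hnb a} : Set (ZigzagAlgebra ℂ G)) =
        Set.range ![E G a, Om G nb hnb a] := by
      ext z
      simp [Matrix.range_cons, Matrix.range_empty]
      tauto
    rw [hset, finrank_span_eq_card (pair_indep G nb hnb a), Fintype.card_fin]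
    simp
  · simp only [if_neg hab]
    by_cases hadj : G.Adj a b
    · simp only [if_pos hadj]
      have heq : Submodule.span ℂ (C '' Sset G nb hnb) =
          Submodule.span ℂ {X G hadj.symm} := by
        apply le_antisymm
        · rw [Submodule.span_le]
          rintro _ ⟨s, hs, rfl⟩
          rcases hs with ⟨c, rfl⟩ | ⟨a1, b1, h1, rfl⟩ | ⟨c, rfl⟩
          · rw [hCapp]
            by_cases hc : c = a
            · subst hc
              rw [E_mul_E, E_mul_E_ne G hab]
              exact Submodule.zero_mem _
            · rw [E_mul_E_ne G (fun hh => hc hh.symm), zero_mul]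
              exact Submodule.zero_mem _
          · rw [hCapp]
            by_cases hb1 : a = b1
            · subst hb1
              rw [E_mul_X]
              by_cases ha1 : a1 = b
              · subst ha1
                rw [X_mul_E]
                exact Submodule.subset_span rfl
              · rw [X_mul_E_ne G h1 ha1]; exact Submodule.zero_mem _
            · rw [E_mul_X_ne G h1 hb1, zero_mul]; exact Submodule.zero_mem _
          · rw [hCapp]
            by_cases hc : c = a
            · subst hc
              rw [E_mul_Om G nb hnb, Om_mul_E_ne G nb hnb hab]
              exact Submodule.zero_mem _
            · rw [E_mul_Om_ne G nb hnb (fun hh => hc hh.symm), zero_mul]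
              exact Submodule.zero_mem _
        · rw [Submodule.span_le]
          rintro z rfl
          refine Submodule.subset_span ⟨X G hadj.symm, mem_S_X G nb hnb hadj.symm, ?_⟩
          rw [hCapp, E_mul_X, X_mul_E]
      rw [hrange, heq]
      exact finrank_span_singleton (X_ne_zero G hadj.symm)
    · simp only [if_neg hadj]
      have heq : Submodule.span ℂ (C '' Sset G nb hnb) = ⊥ := by
        rw [Submodule.span_eq_bot]
        rintro _ ⟨s, hs, rfl⟩
        rcases hs with ⟨c, rfl⟩ | ⟨a1, b1, h1, rfl⟩ | ⟨c, rfl⟩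
        · rw [hCapp]
          by_cases hc : c = a
          · subst hc
            rw [E_mul_E, E_mul_E_ne G hab]
          · rw [E_mul_E_ne G (fun hh => hc hh.symm), zero_mul]
        · rw [hCapp]
          by_cases hb1 : a = b1
          · subst hb1
            rw [E_mul_X]
            by_cases ha1 : a1 = b
            · subst ha1; exact absurd h1 (fun hh => hadj hh.symm)
            · rw [X_mul_E_ne G h1 ha1]
          · rw [E_mul_X_ne G h1 hb1, zero_mul]
        · rw [hCapp]
          by_cases hc : c = a
          · subst hc
            rw [E_mul_Om G nb hnb, Om_mul_E_ne G nb hnb hab]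
          · rw [E_mul_Om_ne G nb hnb (fun hh => hc hh.symm), zero_mul]
      rw [hrange, heq]
      exact finrank_bot ℂ _

end
end

section
/- For simple roots α, β ∈ Π with (α,β) = 0, the operators on R satisfy E_α E_β = E_β E_α; and for α, β ∈ Π with (α,β) = −1, they satisfy the quantum Serre relation E_α² E_β − (q + q⁻¹) E_α E_β E_α + E_β E_α² = 0 as ℚ(q)-linear endomorphisms of R. -/
/-!
The adjoint representation of a simply-laced quantum group, realized concretely on the
`ℚ(q)`-vector space with basis `{x_μ : μ ∈ Φ} ∪ {h_α : α ∈ Π}`.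
-/

noncomputable section

open Polynomial

/-- The field `ℚ(q)` of rational functions over `ℚ`. -/
abbrev Qq : Type := RatFunc ℚ

/-- The indeterminate `q ∈ ℚ(q)`. -/
def qv : Qq := RatFunc.X

/-- A datum abstracting a simply-laced root system `Φ` with base `Π`, normalized so that
`(α, α) = 2` for roots: a symmetric bilinear form `B` together with the standard
combinatorial facts about pairings of roots and simple roots that hold in any finite
reduced irreducible crystallographic simply-laced root system. -/
structure SimplyLacedDatum (E : Type) [AddCommGroup E] [Module ℚ E] where
  /-- the inner product `(·,·)` -/
  B : E →ₗ[ℚ] E →ₗ[ℚ] ℚ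
  symm : ∀ x y : E, B x y = B y x
  /-- the set of roots `Φ` -/
  Phi : Set E
  /-- the base `Π` of simple roots -/
  Base : Set E
  base_sub : Base ⊆ Phi
  phi_finite : Phi.Finite
  zero_not_mem : (0 : E) ∉ Phi
  crystallographic : ∀ μ ∈ Phi, ∀ ν ∈ Phi, ∃ n : ℤ, B μ ν = n
  norm_two : ∀ μ ∈ Phi, B μ μ = 2
  neg_mem : ∀ μ ∈ Phi, -μ ∈ Phi
  base_pair : ∀ α ∈ Base, ∀ β ∈ Base, α ≠ β → B α β = 0 ∨ B α β = -1
  pair_range : ∀ μ ∈ Phi, ∀ α ∈ Base,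
      B μ α = -2 ∨ B μ α = -1 ∨ B μ α = 0 ∨ B μ α = 1 ∨ B μ α = 2
  pair_two_iff : ∀ μ ∈ Phi, ∀ α ∈ Base, (B μ α = 2 ↔ μ = α)
  pair_neg_two_iff : ∀ μ ∈ Phi, ∀ α ∈ Base, (B μ α = -2 ↔ μ = -α)
  add_mem : ∀ μ ∈ Phi, ∀ α ∈ Base, B μ α = -1 → μ + α ∈ Phi
  sub_mem : ∀ μ ∈ Phi, ∀ α ∈ Base, B μ α = 1 → μ - α ∈ Phi

namespace SimplyLacedDatum

variable {E : Type} [AddCommGroup E] [Module ℚ E] (D : SimplyLacedDatum E)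

/-- The index set for the canonical basis of the adjoint representation:
one index for each root `μ ∈ Φ` (the vector `x_μ`) and one for each simple root
`α ∈ Π` (the vector `h_α`). -/
def Idx : Type := {μ : E // μ ∈ D.Phi} ⊕ {α : E // α ∈ D.Base}

/-- The adjoint representation `R`, as the free `ℚ(q)`-module on `Idx`. -/
def R : Type := D.Idx →₀ Qq

instance : AddCommGroup D.R := inferInstanceAs (AddCommGroup (D.Idx →₀ Qq))
instance : Module Qq D.R := inferInstanceAs (Module Qq (D.Idx →₀ Qq))

/-- The canonical basis vector `x_μ`, for a root `μ ∈ Φ`. -/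
def xv (μ : E) (h : μ ∈ D.Phi) : D.R := Finsupp.single (Sum.inl ⟨μ, h⟩) 1

/-- The canonical basis vector `h_α`, for a simple root `α ∈ Π`. -/
def hv (α : E) (h : α ∈ D.Base) : D.R := Finsupp.single (Sum.inr ⟨α, h⟩) 1

/-- The `ℚ(q)`-linear operator on `R` sending the basis vector indexed by `i` to `v i`. -/
def opOf (v : D.Idx → D.R) : D.R →ₗ[Qq] D.R :=
  Finsupp.lsum Qq fun i => LinearMap.toSpanSingleton Qq D.R (v i)

open Classical in
/-- The images of the basis vectors under `E_α`. -/
def Evec (α : E) (hα : α ∈ D.Base) : D.Idx → D.R := fun i =>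
  match i with
  | Sum.inl μ =>
      if h : D.B μ.1 α = -1 then D.xv (μ.1 + α) (D.add_mem μ.1 μ.2 α hα h)
      else if D.B μ.1 α = -2 then D.hv α hα
      else 0
  | Sum.inr β =>
      if β.1 = α then (qv + qv⁻¹) • D.xv α (D.base_sub hα)
      else if D.B β.1 α = -1 then D.xv α (D.base_sub hα)
      else 0

open Classical in
/-- The images of the basis vectors under `F_α`. -/
def Fvec (α : E) (hα : α ∈ D.Base) : D.Idx → D.R := fun i =>
  match i with
  | Sum.inl μ =>
      if h : D.B μ.1 α = 1 then D.xv (μ.1 - α) (D.sub_mem μ.1 μ.2 α hα h)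
      else if D.B μ.1 α = 2 then D.hv α hα
      else 0
  | Sum.inr β =>
      if β.1 = α then (qv + qv⁻¹) • D.xv (-α) (D.neg_mem α (D.base_sub hα))
      else if D.B β.1 α = -1 then D.xv (-α) (D.neg_mem α (D.base_sub hα))
      else 0

/-- The images of the basis vectors under `K_α`: `K_α x_μ = q^{(α,μ)} x_μ`,
`K_α h_β = h_β`. -/
def Kvec (α : E) (hα : α ∈ D.Base) : D.Idx → D.R := fun i =>
  match i with
  | Sum.inl μ => qv ^ (D.B α μ.1).num • D.xv μ.1 μ.2
  | Sum.inr β => D.hv β.1 β.2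

/-- The images of the basis vectors under `K_α⁻¹`: `K_α⁻¹ x_μ = q^{−(α,μ)} x_μ`,
`K_α⁻¹ h_β = h_β`. -/
def Kinvvec (α : E) (hα : α ∈ D.Base) : D.Idx → D.R := fun i =>
  match i with
  | Sum.inl μ => qv ^ (-(D.B α μ.1).num) • D.xv μ.1 μ.2
  | Sum.inr β => D.hv β.1 β.2

/-- The operator `E_α` on the adjoint representation. -/
def opE (α : E) (hα : α ∈ D.Base) : D.R →ₗ[Qq] D.R := D.opOf (D.Evec α hα)

/-- The operator `F_α` on the adjoint representation. -/
def opF (α : E) (hα : α ∈ D.Base) : D.R →ₗ[Qq] D.R := D.opOf (D.Fvec α hα)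

/-- The operator `K_α` on the adjoint representation. -/
def opK (α : E) (hα : α ∈ D.Base) : D.R →ₗ[Qq] D.R := D.opOf (D.Kvec α hα)

/-- The operator `K_α⁻¹` on the adjoint representation. -/
def opKinv (α : E) (hα : α ∈ D.Base) : D.R →ₗ[Qq] D.R := D.opOf (D.Kinvvec α hα)

/-! ### Auxiliary lemmas -/

lemma B_add_left (x y z : E) : D.B (x + y) z = D.B x z + D.B y z := by simp

lemma B_neg_left (x z : E) : D.B (-x) z = -(D.B x z) := by simp

lemma xv_congr {μ ν : E} (h : μ = ν) (hμ : μ ∈ D.Phi) (hν : ν ∈ D.Phi) :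
    D.xv μ hμ = D.xv ν hν := by subst h; rfl

lemma opOf_single (v : D.Idx → D.R) (i : D.Idx) :
    D.opOf v (Finsupp.single i (1 : Qq)) = v i := by
  rw [opOf]
  erw [Finsupp.lsum_single]
  simp [LinearMap.toSpanSingleton_apply]

lemma opE_xv (α : E) (hα : α ∈ D.Base) (μ : E) (hμ : μ ∈ D.Phi) :
    D.opE α hα (D.xv μ hμ) = D.Evec α hα (Sum.inl ⟨μ, hμ⟩) :=
  D.opOf_single _ _

lemma opE_hv (α : E) (hα : α ∈ D.Base) (γ : E) (hγ : γ ∈ D.Base) :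
    D.opE α hα (D.hv γ hγ) = D.Evec α hα (Sum.inr ⟨γ, hγ⟩) :=
  D.opOf_single _ _

lemma opE_xv_neg_one (α : E) (hα : α ∈ D.Base) (μ : E) (hμ : μ ∈ D.Phi)
    (h : D.B μ α = -1) :
    D.opE α hα (D.xv μ hμ) = D.xv (μ + α) (D.add_mem μ hμ α hα h) := by
  rw [opE_xv]; simp [Evec, h]

lemma opE_xv_neg_two (α : E) (hα : α ∈ D.Base) (μ : E) (hμ : μ ∈ D.Phi)
    (h : D.B μ α = -2) :
    D.opE α hα (D.xv μ hμ) = D.hv α hα := by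
  rw [opE_xv]; simp [Evec, h]

lemma opE_xv_zero (α : E) (hα : α ∈ D.Base) (μ : E) (hμ : μ ∈ D.Phi)
    (h1 : D.B μ α ≠ -1) (h2 : D.B μ α ≠ -2) :
    D.opE α hα (D.xv μ hμ) = 0 := by
  rw [opE_xv]; simp [Evec, h1, h2]

lemma opE_hv_self (α : E) (hα : α ∈ D.Base) :
    D.opE α hα (D.hv α hα) = (qv + qv⁻¹) • D.xv α (D.base_sub hα) := by
  rw [opE_hv]; simp [Evec]

lemma opE_hv_pair (α : E) (hα : α ∈ D.Base) (γ : E) (hγ : γ ∈ D.Base)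
    (h : D.B γ α = -1) :
    D.opE α hα (D.hv γ hγ) = D.xv α (D.base_sub hα) := by
  have hne : γ ≠ α := by
    intro he; rw [he, D.norm_two α (D.base_sub hα)] at h; norm_num at h
  rw [opE_hv]; simp [Evec, hne, h]

lemma opE_hv_zero (α : E) (hα : α ∈ D.Base) (γ : E) (hγ : γ ∈ D.Base)
    (hne : γ ≠ α) (h : D.B γ α ≠ -1) :
    D.opE α hα (D.hv γ hγ) = 0 := by
  rw [opE_hv]; simp [Evec, hne, h]

lemma opE_hv_smul (α : E) (hα : α ∈ D.Base) (γ : E) (hγ : γ ∈ D.Base) :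
    ∃ c : Qq, D.opE α hα (D.hv γ hγ) = c • D.xv α (D.base_sub hα) := by
  by_cases h1 : γ = α
  · subst h1; exact ⟨qv + qv⁻¹, D.opE_hv_self γ hγ⟩
  by_cases h2 : D.B γ α = -1
  · exact ⟨1, by rw [one_smul]; exact D.opE_hv_pair α hα γ hγ h2⟩
  · exact ⟨0, by rw [zero_smul]; exact D.opE_hv_zero α hα γ hγ h1 h2⟩

lemma R_ext {f g : D.R →ₗ[Qq] D.R}
    (hx : ∀ μ (hμ : μ ∈ D.Phi), f (D.xv μ hμ) = g (D.xv μ hμ))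
    (hh : ∀ γ (hγ : γ ∈ D.Base), f (D.hv γ hγ) = g (D.hv γ hγ)) : f = g := by
  apply Finsupp.lhom_ext
  intro i c
  have h1 : (Finsupp.single i c : D.R) = c • Finsupp.single i (1 : Qq) := by
    rw [Finsupp.smul_single, smul_eq_mul, mul_one]
  have e : ∀ (x : D.R), c • f x = c • g x → f (c • x) = g (c • x) := by
    intro x hx'; rw [map_smul, map_smul]; exact hx'
  rw [h1]
  apply e (Finsupp.single i (1 : Qq))
  rcases i with ⟨μ, hμ⟩ | ⟨γ, hγ⟩
  · exact congrArg (fun z => c • z) (hx μ hμ)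
  · exact congrArg (fun z => c • z) (hh γ hγ)

end SimplyLacedDatum

end

/-- for simple roots `α, β` with `(α,β) = 0` the operators `E_α, E_β`
commute, and for `(α,β) = −1` they satisfy the quantum Serre relation
`E_α² E_β − (q + q⁻¹) E_α E_β E_α + E_β E_α² = 0` on `R`. -/
theorem SimplyLacedDatum.serre_E {E : Type} [AddCommGroup E] [Module ℚ E]
    (D : SimplyLacedDatum E) (α : E) (hα : α ∈ D.Base) (β : E) (hβ : β ∈ D.Base) :
    (D.B α β = 0 → D.opE α hα ∘ₗ D.opE β hβ = D.opE β hβ ∘ₗ D.opE α hα) ∧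
    (D.B α β = -1 →
      D.opE α hα ∘ₗ D.opE α hα ∘ₗ D.opE β hβ
        - (qv + qv⁻¹) • (D.opE α hα ∘ₗ D.opE β hβ ∘ₗ D.opE α hα)
        + D.opE β hβ ∘ₗ D.opE α hα ∘ₗ D.opE α hα = 0) := by
  have hαΦ : α ∈ D.Phi := D.base_sub hα
  have hβΦ : β ∈ D.Phi := D.base_sub hβ
  have hαα : D.B α α = 2 := D.norm_two α hαΦ
  have hββ : D.B β β = 2 := D.norm_two β hβΦ
  constructor
  · -- commuting case
    intro hc
    have hβα : D.B β α = 0 := by rw [D.symm]; exact hc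
    have hne : α ≠ β := by
      intro h; rw [h, hββ] at hc; norm_num at hc
    have hne' : β ≠ α := Ne.symm hne
    apply D.R_ext
    · intro μ hμ
      simp only [LinearMap.comp_apply]
      by_cases hb2 : D.B μ β = -2
      · -- μ = -β
        have hμβ : μ = -β := (D.pair_neg_two_iff μ hμ β hβ).mp hb2
        have ha : D.B μ α = 0 := by rw [hμβ, D.B_neg_left, hβα]; ring
        rw [D.opE_xv_neg_two β hβ μ hμ hb2,
            D.opE_hv_zero α hα β hβ hne' (by rw [hβα]; norm_num),
            D.opE_xv_zero α hα μ hμ (by rw [ha]; norm_num) (by rw [ha]; norm_num),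
            map_zero]
      · by_cases hb1 : D.B μ β = -1
        · rw [D.opE_xv_neg_one β hβ μ hμ hb1]
          have hμβΦ : μ + β ∈ D.Phi := D.add_mem μ hμ β hβ hb1
          have hpb : D.B (μ + β) α = D.B μ α := by rw [D.B_add_left, hβα]; ring
          by_cases ha2 : D.B μ α = -2
          · exfalso
            have hμα : μ = -α := (D.pair_neg_two_iff μ hμ α hα).mp ha2
            rw [hμα, D.B_neg_left, hc] at hb1; norm_num at hb1
          · by_cases ha1 : D.B μ α = -1
            · rw [D.opE_xv_neg_one α hα (μ + β) hμβΦ (by rw [hpb, ha1]),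
                  D.opE_xv_neg_one α hα μ hμ ha1,
                  D.opE_xv_neg_one β hβ (μ + α) (D.add_mem μ hμ α hα ha1)
                    (by rw [D.B_add_left, hb1, hc]; ring)]
              exact D.xv_congr (by abel) _ _
            · rw [D.opE_xv_zero α hα (μ + β) hμβΦ (by rw [hpb]; exact ha1)
                    (by rw [hpb]; exact ha2),
                  D.opE_xv_zero α hα μ hμ ha1 ha2, map_zero]
        · -- B μ β ∉ {-1, -2}
          rw [D.opE_xv_zero β hβ μ hμ hb1 hb2, map_zero]
          by_cases ha2 : D.B μ α = -2
          · have hμα : μ = -α := (D.pair_neg_two_iff μ hμ α hα).mp ha2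
            rw [D.opE_xv_neg_two α hα μ hμ ha2,
                D.opE_hv_zero β hβ α hα hne (by rw [hc]; norm_num)]
          · by_cases ha1 : D.B μ α = -1
            · have hμαΦ : μ + α ∈ D.Phi := D.add_mem μ hμ α hα ha1
              have hpa : D.B (μ + α) β = D.B μ β := by
                rw [D.B_add_left, hc]; ring
              rw [D.opE_xv_neg_one α hα μ hμ ha1,
                  D.opE_xv_zero β hβ (μ + α) hμαΦ (by rw [hpa]; exact hb1)
                    (by rw [hpa]; exact hb2)]
            · rw [D.opE_xv_zero α hα μ hμ ha1 ha2, map_zero]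
    · intro γ hγ
      simp only [LinearMap.comp_apply]
      obtain ⟨cb, hcb⟩ := D.opE_hv_smul β hβ γ hγ
      obtain ⟨ca, hca⟩ := D.opE_hv_smul α hα γ hγ
      rw [hcb, hca, map_smul, map_smul,
          D.opE_xv_zero α hα β hβΦ (by rw [hβα]; norm_num) (by rw [hβα]; norm_num),
          D.opE_xv_zero β hβ α hαΦ (by rw [hc]; norm_num) (by rw [hc]; norm_num),
          smul_zero, smul_zero]
  · -- Serre case
    intro hc
    have hβα : D.B β α = -1 := by rw [D.symm]; exact hc
    have hne : α ≠ β := by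
      intro h; rw [h, hββ] at hc; norm_num at hc
    have hne' : β ≠ α := Ne.symm hne
    have hαβΦ : α + β ∈ D.Phi := D.add_mem α hαΦ β hβ hc
    have key : ∀ μ (hμ : μ ∈ D.Phi),
        D.opE α hα (D.opE α hα (D.opE β hβ (D.xv μ hμ)))
          - (qv + qv⁻¹) • D.opE α hα (D.opE β hβ (D.opE α hα (D.xv μ hμ)))
          + D.opE β hβ (D.opE α hα (D.opE α hα (D.xv μ hμ))) = 0 := by
      intro μ hμ
      by_cases ha2 : D.B μ α = -2
      · -- μ = -α
        have hμα : μ = -α := (D.pair_neg_two_iff μ hμ α hα).mp ha2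
        have hb : D.B μ β = 1 := by rw [hμα, D.B_neg_left, hc]; ring
        rw [D.opE_xv_zero β hβ μ hμ (by rw [hb]; norm_num) (by rw [hb]; norm_num),
            map_zero, map_zero,
            D.opE_xv_neg_two α hα μ hμ ha2,
            D.opE_hv_pair β hβ α hα hc,
            D.opE_xv_neg_one α hα β hβΦ hβα,
            D.opE_hv_self α hα, map_smul,
            D.opE_xv_neg_one β hβ α hαΦ hc,
            D.xv_congr (show β + α = α + β by abel)
              (D.add_mem β hβΦ α hα hβα) hαβΦ]
        abel
      · by_cases ha1 : D.B μ α = -1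
        · have hμαΦ : μ + α ∈ D.Phi := D.add_mem μ hμ α hα ha1
          have hT3 : D.B (μ + α) α = 1 := by rw [D.B_add_left, ha1, hαα]; ring
          rw [D.opE_xv_neg_one α hα μ hμ ha1,
              D.opE_xv_zero α hα (μ + α) hμαΦ (by rw [hT3]; norm_num)
                (by rw [hT3]; norm_num), map_zero]
          by_cases hb1 : D.B μ β = -1
          · have hμβΦ : μ + β ∈ D.Phi := D.add_mem μ hμ β hβ hb1
            have e1 : D.B (μ + β) α = -2 := by rw [D.B_add_left, ha1, hβα]; ring
            have e2 : D.B (μ + α) β = -2 := by rw [D.B_add_left, hb1, hc]; ring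
            rw [D.opE_xv_neg_one β hβ μ hμ hb1,
                D.opE_xv_neg_two α hα (μ + β) hμβΦ e1,
                D.opE_hv_self α hα,
                D.opE_xv_neg_two β hβ (μ + α) hμαΦ e2,
                D.opE_hv_pair α hα β hβ hβα]
            abel
          · by_cases hb2 : D.B μ β = -2
            · exfalso
              have hμβ : μ = -β := (D.pair_neg_two_iff μ hμ β hβ).mp hb2
              rw [hμβ, D.B_neg_left, hβα] at ha1; norm_num at ha1
            · rw [D.opE_xv_zero β hβ μ hμ hb1 hb2, map_zero, map_zero]
              by_cases hb0 : D.B μ β = 0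
              · have e1 : D.B (μ + α) β = -1 := by rw [D.B_add_left, hb0, hc]; ring
                have e2 : D.B (μ + α + β) α = 0 := by
                  rw [D.B_add_left, D.B_add_left, ha1, hαα, hβα]; ring
                rw [D.opE_xv_neg_one β hβ (μ + α) hμαΦ e1,
                    D.opE_xv_zero α hα (μ + α + β)
                      (D.add_mem (μ + α) hμαΦ β hβ e1)
                      (by rw [e2]; norm_num) (by rw [e2]; norm_num)]
                simp
              · have e1 : D.B (μ + α) β = D.B μ β - 1 := by
                  rw [D.B_add_left, hc]; ring
                rw [D.opE_xv_zero β hβ (μ + α) hμαΦ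
                      (by rw [e1]; intro h; apply hb0; linarith)
                      (by rw [e1]; intro h; apply hb1; linarith),
                    map_zero]
                simp
        · -- B μ α ∉ {-1, -2}
          rw [D.opE_xv_zero α hα μ hμ ha1 ha2, map_zero, map_zero, map_zero]
          by_cases hb2 : D.B μ β = -2
          · rw [D.opE_xv_neg_two β hβ μ hμ hb2,
                D.opE_hv_pair α hα β hβ hβα,
                D.opE_xv_zero α hα α hαΦ (by rw [hαα]; norm_num)
                  (by rw [hαα]; norm_num)]
            simp
          · by_cases hb1 : D.B μ β = -1
            · have hμβΦ : μ + β ∈ D.Phi := D.add_mem μ hμ β hβ hb1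
              have e1 : D.B (μ + β) α = D.B μ α - 1 := by
                rw [D.B_add_left, hβα]; ring
              by_cases ha0 : D.B μ α = 0
              · have e2 : D.B (μ + β) α = -1 := by rw [e1, ha0]; ring
                have e3 : D.B (μ + β + α) α = 1 := by
                  rw [D.B_add_left, e2, hαα]; ring
                rw [D.opE_xv_neg_one β hβ μ hμ hb1,
                    D.opE_xv_neg_one α hα (μ + β) hμβΦ e2,
                    D.opE_xv_zero α hα (μ + β + α)
                      (D.add_mem (μ + β) hμβΦ α hα e2)
                      (by rw [e3]; norm_num) (by rw [e3]; norm_num)]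
                simp
              · rw [D.opE_xv_neg_one β hβ μ hμ hb1,
                    D.opE_xv_zero α hα (μ + β) hμβΦ
                      (by rw [e1]; intro h; apply ha0; linarith)
                      (by rw [e1]; intro h; apply ha1; linarith),
                    map_zero]
                simp
            · rw [D.opE_xv_zero β hβ μ hμ hb1 hb2, map_zero, map_zero]
              simp
    apply D.R_ext
    · intro μ hμ
      simp only [LinearMap.add_apply, LinearMap.sub_apply, LinearMap.smul_apply,
        LinearMap.comp_apply, LinearMap.zero_apply]
      exact key μ hμ
    · intro γ hγ
      simp only [LinearMap.add_apply, LinearMap.sub_apply, LinearMap.smul_apply,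
        LinearMap.comp_apply, LinearMap.zero_apply]
      obtain ⟨ca, hca⟩ := D.opE_hv_smul α hα γ hγ
      obtain ⟨cb, hcb⟩ := D.opE_hv_smul β hβ γ hγ
      have eab : D.B (α + β) α = 1 := by rw [D.B_add_left, hαα, hβα]; ring
      have eba : D.B (β + α) α = 1 := by rw [D.B_add_left, hαα, hβα]; ring
      rw [hca, hcb]
      simp only [map_smul]
      rw [D.opE_xv_neg_one α hα β hβΦ hβα,
          D.opE_xv_zero α hα (β + α) (D.add_mem β hβΦ α hα hβα)
            (by rw [eba]; norm_num) (by rw [eba]; norm_num),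
          D.opE_xv_neg_one β hβ α hαΦ hc,
          D.opE_xv_zero α hα (α + β) hαβΦ
            (by rw [eab]; norm_num) (by rw [eab]; norm_num),
          D.opE_xv_zero α hα α hαΦ (by rw [hαα]; norm_num)
            (by rw [hαα]; norm_num)]
      simp
end
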